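/- arXiv:1511.00654 — 4 statements merged into one kernel-verified Lean document; each statement's English description precedes it below -/
import Mathlib

section
/- Let 0 < α < 1 and I = [0, T) with 0 < T ≤ ∞. Let b, g : I → ℝ be nonnegative functions on I and let u : I → ℝ be nonnegative and locally integrable on I. For an integer n ≥ 1, define H_n(t) = ∑_{i=0}^{n} C(n,i) · b(t)^{n−i} · g(t)^{i} · (Γ(α))^{i} / Γ(iα + n − i) · ∫₀ᵗ (t − s)^{iα + n − i − 1} u(s) ds. Then for every integer n with n ≥ 2/α and every t ∈ I, H_n(t) ≤ (Γ(α))^{n} · max{t^{nα−1}, t^{n}} / Γ(nα) · (b(t) + g(t))^{n} · ∫₀ᵗ u(s) ds. -/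
open MeasureTheory Real Finset

lemma one_le_Gamma_of_le_one {x : ℝ} (h0 : 0 < x) (h1 : x ≤ 1) : 1 ≤ Real.Gamma x := by
  rcases eq_or_lt_of_le h1 with h | h
  · rw [h, Real.Gamma_one]
  · have h2x : (0:ℝ) < 2 - x := by linarith
    set a : ℝ := 1 / (2 - x) with ha
    set c : ℝ := (1 - x) / (2 - x) with hc
    have ha0 : 0 < a := by positivity
    have hc0 : 0 ≤ c := by
      apply div_nonneg <;> linarith
    have hsum : a + c = 1 := by
      rw [ha, hc]
      field_simp
      ring
    have key := Real.convexOn_Gamma.2 (Set.mem_Ioi.mpr h0)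
      (Set.mem_Ioi.mpr (by norm_num : (0:ℝ) < 2)) ha0.le hc0 hsum
    have hx1 : a • x + c • (2:ℝ) = 1 := by
      rw [smul_eq_mul, smul_eq_mul, ha, hc]
      field_simp
      ring
    rw [hx1, Real.Gamma_one, smul_eq_mul, smul_eq_mul, Real.Gamma_two] at key
    nlinarith

/-- The bound on `H_n(t)` from the second claim in the proof of Theorem 2.1:
for `n ≥ 2/α`,
`H_n(t) ≤ Γ(α)^n · max{t^{nα−1}, t^n} / Γ(nα) · (b(t)+g(t))^n · ∫₀ᵗ u(s) ds`. -/
theorem Hn_bound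
    (α : ℝ) (hα0 : 0 < α) (hα1 : α < 1)
    (T : EReal) (hT : 0 < T)
    (b g u : ℝ → ℝ)
    (hb_nonneg : ∀ t : ℝ, 0 ≤ t → (t : EReal) < T → 0 ≤ b t)
    (hg_nonneg : ∀ t : ℝ, 0 ≤ t → (t : EReal) < T → 0 ≤ g t)
    (hu_nonneg : ∀ t : ℝ, 0 ≤ t → (t : EReal) < T → 0 ≤ u t)
    (hu_int : ∀ t : ℝ, 0 ≤ t → (t : EReal) < T → IntervalIntegrable u volume 0 t) :
    ∀ n : ℕ, 1 ≤ n → 2 / α ≤ (n : ℝ) → ∀ t : ℝ, 0 ≤ t → (t : EReal) < T →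
      (∑ i ∈ Finset.range (n + 1),
        (n.choose i : ℝ) * b t ^ (n - i) * g t ^ i *
          Real.Gamma α ^ i / Real.Gamma ((i : ℝ) * α + (n : ℝ) - (i : ℝ)) *
          ∫ s in (0:ℝ)..t, (t - s) ^ ((i : ℝ) * α + (n : ℝ) - (i : ℝ) - 1) * u s) ≤
      Real.Gamma α ^ n * max (t ^ ((n : ℝ) * α - 1)) (t ^ (n : ℝ)) / Real.Gamma ((n : ℝ) * α) *
        (b t + g t) ^ n * ∫ s in (0:ℝ)..t, u s := by
  intro n hn1 hnα t ht htT
  have hΓα : (0:ℝ) < Real.Gamma α := Real.Gamma_pos_of_pos hα0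
  have hΓα1 : (1:ℝ) ≤ Real.Gamma α := one_le_Gamma_of_le_one hα0 hα1.le
  have hb' := hb_nonneg t ht htT
  have hg' := hg_nonneg t ht htT
  have hUint := hu_int t ht htT
  have hu' : ∀ s ∈ Set.Icc (0:ℝ) t, 0 ≤ u s := by
    intro s hs
    exact hu_nonneg s hs.1 (lt_of_le_of_lt (EReal.coe_le_coe_iff.mpr hs.2) htT)
  set M := max (t ^ ((n:ℝ)*α - 1)) (t ^ (n:ℝ)) with hM
  have hM0 : 0 ≤ M := le_max_of_le_right (Real.rpow_nonneg ht _)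
  have hU0 : 0 ≤ ∫ s in (0:ℝ)..t, u s :=
    intervalIntegral.integral_nonneg ht (fun s hs => hu' s hs)
  have h2nα : 2 ≤ (n:ℝ)*α := by
    rw [div_le_iff₀ hα0] at hnα; linarith
  have hΓnα : 0 < Real.Gamma ((n:ℝ)*α) := Real.Gamma_pos_of_pos (by linarith)
  have key : ∀ i ∈ Finset.range (n+1),
      (n.choose i : ℝ) * b t ^ (n - i) * g t ^ i *
          Real.Gamma α ^ i / Real.Gamma ((i : ℝ) * α + (n : ℝ) - (i : ℝ)) *
          ∫ s in (0:ℝ)..t, (t - s) ^ ((i : ℝ) * α + (n : ℝ) - (i : ℝ) - 1) * u s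
      ≤ (n.choose i : ℝ) * b t ^ (n - i) * g t ^ i *
          (Real.Gamma α ^ n * M / Real.Gamma ((n:ℝ)*α) * ∫ s in (0:ℝ)..t, u s) := by
    intro i hi
    rw [Finset.mem_range, Nat.lt_succ_iff] at hi
    have hin : (i:ℝ) ≤ (n:ℝ) := Nat.cast_le.mpr hi
    have hi0 : (0:ℝ) ≤ (i:ℝ) := Nat.cast_nonneg i
    have hβ : (n:ℝ)*α ≤ (i:ℝ)*α + (n:ℝ) - (i:ℝ) := by nlinarith
    have hβ2 : (2:ℝ) ≤ (i:ℝ)*α + (n:ℝ) - (i:ℝ) := le_trans h2nα hβ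
    have hΓβ : 0 < Real.Gamma ((i:ℝ)*α + (n:ℝ) - (i:ℝ)) :=
      Real.Gamma_pos_of_pos (by linarith)
    have hq1 : (1:ℝ) ≤ (i:ℝ)*α + (n:ℝ) - (i:ℝ) - 1 := by linarith
    have hpt : ∀ s ∈ Set.Icc (0:ℝ) t,
        (t - s) ^ ((i:ℝ)*α + (n:ℝ) - (i:ℝ) - 1) * u s ≤ M * u s := by
      intro s hs
      have h1 : (t - s) ^ ((i:ℝ)*α + (n:ℝ) - (i:ℝ) - 1)
          ≤ t ^ ((i:ℝ)*α + (n:ℝ) - (i:ℝ) - 1) :=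
        Real.rpow_le_rpow (by linarith [hs.2]) (by linarith [hs.1]) (by linarith)
      have h2 : t ^ ((i:ℝ)*α + (n:ℝ) - (i:ℝ) - 1) ≤ M := by
        rcases le_or_gt 1 t with h | h
        · refine le_max_of_le_right (Real.rpow_le_rpow_of_exponent_le h ?_)
          nlinarith
        · rcases eq_or_lt_of_le ht with h0 | h0
          · rw [← h0, Real.zero_rpow (by linarith : (i:ℝ)*α + (n:ℝ) - (i:ℝ) - 1 ≠ 0)]
            exact hM0
          · exact le_max_of_le_left
              (Real.rpow_le_rpow_of_exponent_ge h0 h.le (by linarith))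
      exact mul_le_mul_of_nonneg_right (h1.trans h2) (hu' s hs)
    have hcont : Continuous fun s : ℝ => (t - s) ^ ((i:ℝ)*α + (n:ℝ) - (i:ℝ) - 1) :=
      (Real.continuous_rpow_const (by linarith)).comp (continuous_const.sub continuous_id)
    have hint1 : IntervalIntegrable
        (fun s => (t - s) ^ ((i:ℝ)*α + (n:ℝ) - (i:ℝ) - 1) * u s) volume 0 t :=
      hUint.continuousOn_mul hcont.continuousOn
    have hIle : (∫ s in (0:ℝ)..t, (t - s) ^ ((i:ℝ)*α + (n:ℝ) - (i:ℝ) - 1) * u s)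
        ≤ M * ∫ s in (0:ℝ)..t, u s := by
      rw [← intervalIntegral.integral_const_mul]
      exact intervalIntegral.integral_mono_on ht hint1 (hUint.const_mul M) hpt
    have hI0 : 0 ≤ ∫ s in (0:ℝ)..t, (t - s) ^ ((i:ℝ)*α + (n:ℝ) - (i:ℝ) - 1) * u s :=
      intervalIntegral.integral_nonneg ht (fun s hs =>
        mul_nonneg (Real.rpow_nonneg (by linarith [hs.2]) _) (hu' s hs))
    have hratio : Real.Gamma α ^ i / Real.Gamma ((i:ℝ)*α + (n:ℝ) - (i:ℝ))
        ≤ Real.Gamma α ^ n / Real.Gamma ((n:ℝ)*α) := by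
      rw [div_le_div_iff₀ hΓβ hΓnα]
      have h1 : Real.Gamma α ^ i ≤ Real.Gamma α ^ n := pow_le_pow_right₀ hΓα1 hi
      have h2 : Real.Gamma ((n:ℝ)*α) ≤ Real.Gamma ((i:ℝ)*α + (n:ℝ) - (i:ℝ)) :=
        Real.Gamma_strictMonoOn_Ici.monotoneOn (Set.mem_Ici.mpr h2nα)
          (Set.mem_Ici.mpr hβ2) hβ
      exact mul_le_mul h1 h2 hΓnα.le (pow_nonneg hΓα.le n)
    have hP : 0 ≤ (n.choose i : ℝ) * b t ^ (n - i) * g t ^ i := by positivity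
    have hinner : Real.Gamma α ^ i / Real.Gamma ((i:ℝ)*α + (n:ℝ) - (i:ℝ)) *
        ∫ s in (0:ℝ)..t, (t - s) ^ ((i:ℝ)*α + (n:ℝ) - (i:ℝ) - 1) * u s
        ≤ Real.Gamma α ^ n * M / Real.Gamma ((n:ℝ)*α) * ∫ s in (0:ℝ)..t, u s := by
      calc Real.Gamma α ^ i / Real.Gamma ((i:ℝ)*α + (n:ℝ) - (i:ℝ)) *
          ∫ s in (0:ℝ)..t, (t - s) ^ ((i:ℝ)*α + (n:ℝ) - (i:ℝ) - 1) * u s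
          ≤ Real.Gamma α ^ n / Real.Gamma ((n:ℝ)*α) * (M * ∫ s in (0:ℝ)..t, u s) :=
            mul_le_mul hratio hIle hI0 (div_nonneg (pow_nonneg hΓα.le n) hΓnα.le)
        _ = Real.Gamma α ^ n * M / Real.Gamma ((n:ℝ)*α) * ∫ s in (0:ℝ)..t, u s := by
            ring
    calc (n.choose i : ℝ) * b t ^ (n - i) * g t ^ i *
          Real.Gamma α ^ i / Real.Gamma ((i : ℝ) * α + (n : ℝ) - (i : ℝ)) *
          ∫ s in (0:ℝ)..t, (t - s) ^ ((i : ℝ) * α + (n : ℝ) - (i : ℝ) - 1) * u s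
        = (n.choose i : ℝ) * b t ^ (n - i) * g t ^ i *
          (Real.Gamma α ^ i / Real.Gamma ((i : ℝ) * α + (n : ℝ) - (i : ℝ)) *
          ∫ s in (0:ℝ)..t, (t - s) ^ ((i : ℝ) * α + (n : ℝ) - (i : ℝ) - 1) * u s) := by
          ring
      _ ≤ (n.choose i : ℝ) * b t ^ (n - i) * g t ^ i *
          (Real.Gamma α ^ n * M / Real.Gamma ((n:ℝ)*α) * ∫ s in (0:ℝ)..t, u s) :=
          mul_le_mul_of_nonneg_left hinner hP
  calc (∑ i ∈ Finset.range (n + 1),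
        (n.choose i : ℝ) * b t ^ (n - i) * g t ^ i *
          Real.Gamma α ^ i / Real.Gamma ((i : ℝ) * α + (n : ℝ) - (i : ℝ)) *
          ∫ s in (0:ℝ)..t, (t - s) ^ ((i : ℝ) * α + (n : ℝ) - (i : ℝ) - 1) * u s)
      ≤ ∑ i ∈ Finset.range (n + 1),
        (n.choose i : ℝ) * b t ^ (n - i) * g t ^ i *
          (Real.Gamma α ^ n * M / Real.Gamma ((n:ℝ)*α) * ∫ s in (0:ℝ)..t, u s) :=
        Finset.sum_le_sum key
    _ = (∑ i ∈ Finset.range (n + 1), (n.choose i : ℝ) * b t ^ (n - i) * g t ^ i) *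
          (Real.Gamma α ^ n * M / Real.Gamma ((n:ℝ)*α) * ∫ s in (0:ℝ)..t, u s) := by
        rw [Finset.sum_mul]
    _ = (b t + g t) ^ n *
          (Real.Gamma α ^ n * M / Real.Gamma ((n:ℝ)*α) * ∫ s in (0:ℝ)..t, u s) := by
        rw [add_comm (b t) (g t), add_pow]
        congr 1
        refine Finset.sum_congr rfl fun i _ => ?_
        ring
    _ = Real.Gamma α ^ n * M / Real.Gamma ((n:ℝ)*α) *
          (b t + g t) ^ n * ∫ s in (0:ℝ)..t, u s := by ring
end

section
/- Let 0 < α < 1 and I = [0, T) with 0 < T ≤ ∞. Let b, g : I → ℝ be nonnegative functions on I, both bounded above by a positive constant M, and let u : I → ℝ be nonnegative and locally integrable on I. For an integer n ≥ 1, define H_n(t) = ∑_{i=0}^{n} C(n,i) · b(t)^{n−i} · g(t)^{i} · (Γ(α))^{i} / Γ(iα + n − i) · ∫₀ᵗ (t − s)^{iα + n − i − 1} u(s) ds. Then for every fixed t ∈ I, H_n(t) → 0 as n → ∞. -/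
open MeasureTheory Real Finset Filter

set_option maxHeartbeats 2000000 in
/-- Second claim in the proof of Theorem 2.1: for each fixed `t ∈ [0,T)`,
`H_n(t) → 0` as `n → ∞`. -/
theorem Hn_tendsto_zero
    (α : ℝ) (hα0 : 0 < α) (hα1 : α < 1)
    (T : EReal) (hT : 0 < T)
    (b g u : ℝ → ℝ) (M : ℝ) (hM : 0 < M)
    (hb_nonneg : ∀ t : ℝ, 0 ≤ t → (t : EReal) < T → 0 ≤ b t)
    (hb_bdd : ∀ t : ℝ, 0 ≤ t → (t : EReal) < T → b t ≤ M)
    (hg_nonneg : ∀ t : ℝ, 0 ≤ t → (t : EReal) < T → 0 ≤ g t)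
    (hg_bdd : ∀ t : ℝ, 0 ≤ t → (t : EReal) < T → g t ≤ M)
    (hu_nonneg : ∀ t : ℝ, 0 ≤ t → (t : EReal) < T → 0 ≤ u t)
    (hu_int : ∀ t : ℝ, 0 ≤ t → (t : EReal) < T → IntervalIntegrable u volume 0 t) :
    ∀ t : ℝ, 0 ≤ t → (t : EReal) < T →
      Tendsto (fun n : ℕ => ∑ i ∈ Finset.range (n + 1 + 1),
        ((n + 1).choose i : ℝ) * b t ^ (n + 1 - i) * g t ^ i *
          Real.Gamma α ^ i / Real.Gamma ((i : ℝ) * α + ((n : ℝ) + 1) - (i : ℝ)) *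
          ∫ s in (0:ℝ)..t, (t - s) ^ ((i : ℝ) * α + ((n : ℝ) + 1) - (i : ℝ) - 1) * u s)
        atTop (nhds 0) := by
  intro t ht0 htT
  -- basic facts
  have hsT : ∀ s : ℝ, s ≤ t → (s : EReal) < T := fun s hs =>
    lt_of_le_of_lt (EReal.coe_le_coe_iff.2 hs) htT
  have hbt : 0 ≤ b t := hb_nonneg t ht0 htT
  have hgt : 0 ≤ g t := hg_nonneg t ht0 htT
  have hbM : b t ≤ M := hb_bdd t ht0 htT
  have hgM : g t ≤ M := hg_bdd t ht0 htT
  have hΓα : 0 < Real.Gamma α := Real.Gamma_pos_of_pos hα0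
  set K : ℝ := max t 1 with hK
  have hK1 : (1:ℝ) ≤ K := le_max_right t 1
  have hK0 : (0:ℝ) < K := lt_of_lt_of_le one_pos hK1
  set M' : ℝ := max M 1 with hM'
  have hM'1 : (1:ℝ) ≤ M' := le_max_right M 1
  have hbM' : b t ≤ M' := hbM.trans (le_max_left M 1)
  have hgM' : g t ≤ M' := hgM.trans (le_max_left M 1)
  set G : ℝ := max (Real.Gamma α) 1 with hG
  have hG1 : (1:ℝ) ≤ G := le_max_right _ 1
  set Iu : ℝ := ∫ s in (0:ℝ)..t, u s with hIu
  have hIu0 : 0 ≤ Iu := by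
    apply intervalIntegral.integral_nonneg ht0
    intro s hs
    exact hu_nonneg s hs.1 (hsT s hs.2)
  set P : ℝ := 2 * (M' * G * K) with hP
  have hP1 : (1:ℝ) ≤ P := by
    have h1 : (1:ℝ)*1 ≤ M' * G := mul_le_mul hM'1 hG1 zero_le_one (le_trans zero_le_one hM'1)
    have h2 : (1:ℝ)*1 ≤ (M' * G) * K := mul_le_mul (by linarith) hK1 zero_le_one (by linarith)
    nlinarith
  set c : ℕ := ⌈1/α⌉₊ with hc
  set S : ℝ := P ^ c with hS
  have hS1 : (1:ℝ) ≤ S := one_le_pow₀ hP1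
  set k : ℕ → ℕ := fun n => ⌊((n:ℝ)+1)*α⌋₊ with hk
  -- the dominating sequence
  set gbd : ℕ → ℝ := fun n => Iu * S^2 * (S ^ (k n - 1) / (Nat.factorial (k n - 1) : ℝ)) with hgbd
  -- k n tends to atTop
  have hnα : Tendsto (fun n : ℕ => ((n:ℝ)+1)*α) atTop atTop := by
    have h0 : Tendsto (fun n : ℕ => (n:ℝ)) atTop atTop := tendsto_natCast_atTop_atTop
    exact (tendsto_atTop_add_const_right _ 1 h0).atTop_mul_const hα0
  have hkTop : Tendsto (fun n => k n) atTop atTop := by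
    exact (tendsto_nat_floor_atTop (α := ℝ)).comp hnα
  have hφTop : Tendsto (fun n => k n - 1) atTop atTop :=
    (tendsto_sub_atTop_nat 1).comp hkTop
  have hgbd_tendsto : Tendsto gbd atTop (nhds 0) := by
    have h1 : Tendsto (fun m : ℕ => S ^ m / (Nat.factorial m : ℝ)) atTop (nhds 0) :=
      FloorSemiring.tendsto_pow_div_factorial_atTop S
    have h2 := (h1.comp hφTop).const_mul (Iu * S^2)
    simpa using h2
  -- nonnegativity of each H_n
  have hβpos : ∀ n : ℕ, ∀ i ∈ Finset.range (n + 1 + 1),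
      ((n:ℝ)+1)*α ≤ (i : ℝ) * α + ((n : ℝ) + 1) - (i : ℝ) := by
    intro n i hi
    have hi' : (i:ℝ) ≤ (n:ℝ)+1 := by
      have := Nat.lt_succ_iff.mp (Finset.mem_range.mp hi)
      exact_mod_cast this
    nlinarith
  have hHnonneg : ∀ n : ℕ, 0 ≤ ∑ i ∈ Finset.range (n + 1 + 1),
        ((n + 1).choose i : ℝ) * b t ^ (n + 1 - i) * g t ^ i *
          Real.Gamma α ^ i / Real.Gamma ((i : ℝ) * α + ((n : ℝ) + 1) - (i : ℝ)) *
          ∫ s in (0:ℝ)..t, (t - s) ^ ((i : ℝ) * α + ((n : ℝ) + 1) - (i : ℝ) - 1) * u s := by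
    intro n
    apply Finset.sum_nonneg
    intro i hi
    have hβ : 0 < (i : ℝ) * α + ((n : ℝ) + 1) - (i : ℝ) :=
      lt_of_lt_of_le (by positivity) (hβpos n i hi)
    have hint : 0 ≤ ∫ s in (0:ℝ)..t, (t - s) ^ ((i : ℝ) * α + ((n : ℝ) + 1) - (i : ℝ) - 1) * u s := by
      apply intervalIntegral.integral_nonneg ht0
      intro s hs
      exact mul_nonneg (Real.rpow_nonneg (by linarith [hs.2]) _) (hu_nonneg s hs.1 (hsT s hs.2))
    have hΓβ : 0 < Real.Gamma ((i : ℝ) * α + ((n : ℝ) + 1) - (i : ℝ)) := Real.Gamma_pos_of_pos hβ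
    positivity
  -- eventual bound
  have hbound : ∀ᶠ n : ℕ in atTop, (∑ i ∈ Finset.range (n + 1 + 1),
        ((n + 1).choose i : ℝ) * b t ^ (n + 1 - i) * g t ^ i *
          Real.Gamma α ^ i / Real.Gamma ((i : ℝ) * α + ((n : ℝ) + 1) - (i : ℝ)) *
          ∫ s in (0:ℝ)..t, (t - s) ^ ((i : ℝ) * α + ((n : ℝ) + 1) - (i : ℝ) - 1) * u s) ≤ gbd n := by
    have h2 : ∀ᶠ n : ℕ in atTop, (2:ℝ) ≤ ((n:ℝ)+1)*α := by
      exact hnα.eventually_ge_atTop 2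
    filter_upwards [h2] with n hn2
    -- notation
    have hk2 : 2 ≤ k n := Nat.le_floor (by exact_mod_cast hn2)
    have hkle : ((k n : ℝ)) ≤ ((n:ℝ)+1)*α := Nat.floor_le (by positivity)
    have hklt : ((n:ℝ)+1)*α < (k n : ℝ) + 1 := Nat.lt_floor_add_one _
    have hΓnα : 0 < Real.Gamma (((n:ℝ)+1)*α) := Real.Gamma_pos_of_pos (by positivity)
    -- Gamma lower bound by factorial
    have hΓfac : (Nat.factorial (k n - 1) : ℝ) ≤ Real.Gamma (((n:ℝ)+1)*α) := by
      have hcast : ((k n : ℝ)) = ((k n - 1 : ℕ) : ℝ) + 1 := by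
        have h : 1 ≤ k n := le_trans (by norm_num) hk2
        rw [Nat.cast_sub h]; push_cast; ring
      have h1 : Real.Gamma ((k n : ℝ)) = (Nat.factorial (k n - 1) : ℝ) := by
        rw [hcast, Real.Gamma_nat_eq_factorial]
      rw [← h1]
      rcases eq_or_lt_of_le hkle with h | h
      · rw [h]
      · exact le_of_lt (Real.Gamma_strictMonoOn_Ici (Set.mem_Ici.2 (by exact_mod_cast hk2)) (Set.mem_Ici.2 (by linarith)) h)
    have hfacpos : (0:ℝ) < (Nat.factorial (k n - 1) : ℝ) := by positivity
    -- step 1: bound the sum by P^(n+1) * Iu / (k n - 1)!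
    have step1 : (∑ i ∈ Finset.range (n + 1 + 1),
        ((n + 1).choose i : ℝ) * b t ^ (n + 1 - i) * g t ^ i *
          Real.Gamma α ^ i / Real.Gamma ((i : ℝ) * α + ((n : ℝ) + 1) - (i : ℝ)) *
          ∫ s in (0:ℝ)..t, (t - s) ^ ((i : ℝ) * α + ((n : ℝ) + 1) - (i : ℝ) - 1) * u s)
        ≤ P ^ (n+1) * Iu / (Nat.factorial (k n - 1) : ℝ) := by
      have termbd : ∀ i ∈ Finset.range (n + 1 + 1),
          ((n + 1).choose i : ℝ) * b t ^ (n + 1 - i) * g t ^ i *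
            Real.Gamma α ^ i / Real.Gamma ((i : ℝ) * α + ((n : ℝ) + 1) - (i : ℝ)) *
            ∫ s in (0:ℝ)..t, (t - s) ^ ((i : ℝ) * α + ((n : ℝ) + 1) - (i : ℝ) - 1) * u s
          ≤ ((n + 1).choose i : ℝ) * ((M' * G * K) ^ (n+1) * Iu) / (Nat.factorial (k n - 1) : ℝ) := by
        intro i hi
        have hi' : i ≤ n + 1 := Nat.lt_succ_iff.mp (Finset.mem_range.mp hi)
        have hiR : (i : ℝ) ≤ (n:ℝ)+1 := by exact_mod_cast hi'
        set β : ℝ := (i : ℝ) * α + ((n : ℝ) + 1) - (i : ℝ) with hβdef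
        have hβlo : ((n:ℝ)+1)*α ≤ β := hβpos n i hi
        have hβhi : β ≤ (n:ℝ)+1 := by nlinarith
        have hβ2 : (2:ℝ) ≤ β := le_trans hn2 hβlo
        have hc0 : (0:ℝ) ≤ β - 1 := by linarith
        -- integral bound
        have hintbd : (∫ s in (0:ℝ)..t, (t - s) ^ (β - 1) * u s) ≤ K ^ (n+1) * Iu := by
          have hcont : ContinuousOn (fun s : ℝ => (t - s) ^ (β - 1)) (Set.uIcc 0 t) := by
            apply ContinuousOn.rpow_const
            · exact (continuous_const.sub continuous_id).continuousOn
            · intro x _; right; exact hc0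
          have hint1 : IntervalIntegrable (fun s => (t - s) ^ (β - 1) * u s) volume 0 t :=
            (hu_int t ht0 htT).continuousOn_mul hcont
          have hint2 : IntervalIntegrable (fun s => K ^ (n+1) * u s) volume 0 t :=
            (hu_int t ht0 htT).const_mul _
          have hmono : ∀ s ∈ Set.Icc (0:ℝ) t,
              (t - s) ^ (β - 1) * u s ≤ K ^ (n+1) * u s := by
            intro s hs
            apply mul_le_mul_of_nonneg_right _ (hu_nonneg s hs.1 (hsT s hs.2))
            have h1 : (t - s) ^ (β - 1) ≤ K ^ (β - 1) := by
              apply Real.rpow_le_rpow (by linarith [hs.2]) _ hc0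
              have : t - s ≤ t := by linarith [hs.1]
              exact this.trans (le_max_left t 1)
            have h2 : K ^ (β - 1) ≤ K ^ ((n:ℝ)+1) :=
              Real.rpow_le_rpow_of_exponent_le hK1 (by linarith)
            have h3 : K ^ ((n:ℝ)+1) = K ^ (n+1) := by
              rw [← Real.rpow_natCast K (n+1)]; push_cast; ring_nf
            linarith
          calc (∫ s in (0:ℝ)..t, (t - s) ^ (β - 1) * u s)
              ≤ ∫ s in (0:ℝ)..t, K ^ (n+1) * u s :=
                intervalIntegral.integral_mono_on ht0 hint1 hint2 hmono
            _ = K ^ (n+1) * Iu := intervalIntegral.integral_const_mul _ _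
        have hintnn : 0 ≤ ∫ s in (0:ℝ)..t, (t - s) ^ (β - 1) * u s := by
          apply intervalIntegral.integral_nonneg ht0
          intro s hs
          exact mul_nonneg (Real.rpow_nonneg (by linarith [hs.2]) _) (hu_nonneg s hs.1 (hsT s hs.2))
        have hΓβ : 0 < Real.Gamma β := Real.Gamma_pos_of_pos (by linarith)
        have hΓβ_ge : (Nat.factorial (k n - 1) : ℝ) ≤ Real.Gamma β := by
          refine hΓfac.trans ?_
          rcases eq_or_lt_of_le hβlo with h | h
          · rw [h]
          · exact le_of_lt (Real.Gamma_strictMonoOn_Ici (Set.mem_Ici.2 (by linarith))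
              (Set.mem_Ici.2 (by linarith)) h)
        -- numerator bound
        have hnum : b t ^ (n + 1 - i) * g t ^ i * Real.Gamma α ^ i * (K ^ (n+1) * Iu)
            ≤ (M' * G * K) ^ (n+1) * Iu := by
          have h1 : b t ^ (n + 1 - i) ≤ M' ^ (n + 1 - i) := pow_le_pow_left₀ hbt hbM' _
          have h2 : g t ^ i ≤ M' ^ i := pow_le_pow_left₀ hgt hgM' _
          have h3 : Real.Gamma α ^ i ≤ G ^ i := pow_le_pow_left₀ hΓα.le (le_max_left _ _) _
          have h4 : G ^ i ≤ G ^ (n+1) := pow_le_pow_right₀ hG1 hi'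
          have hMM : M' ^ (n + 1 - i) * M' ^ i = M' ^ (n+1) := by
            rw [← pow_add, Nat.sub_add_cancel hi']
          have : b t ^ (n + 1 - i) * g t ^ i * Real.Gamma α ^ i ≤ M' ^ (n+1) * G ^ (n+1) := by
            calc b t ^ (n + 1 - i) * g t ^ i * Real.Gamma α ^ i
                ≤ M' ^ (n + 1 - i) * M' ^ i * G ^ (n+1) := by
                  apply mul_le_mul (mul_le_mul h1 h2 (by positivity) (by positivity))
                    (h3.trans h4) (by positivity) (by positivity)
              _ = M' ^ (n+1) * G ^ (n+1) := by rw [hMM]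
          calc b t ^ (n + 1 - i) * g t ^ i * Real.Gamma α ^ i * (K ^ (n+1) * Iu)
              ≤ M' ^ (n+1) * G ^ (n+1) * (K ^ (n+1) * Iu) := by
                apply mul_le_mul_of_nonneg_right this (by positivity)
            _ = (M' * G * K) ^ (n+1) * Iu := by ring
        calc ((n + 1).choose i : ℝ) * b t ^ (n + 1 - i) * g t ^ i *
              Real.Gamma α ^ i / Real.Gamma β *
              ∫ s in (0:ℝ)..t, (t - s) ^ (β - 1) * u s
            ≤ ((n + 1).choose i : ℝ) * b t ^ (n + 1 - i) * g t ^ i *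
              Real.Gamma α ^ i / (Nat.factorial (k n - 1) : ℝ) *
              (K ^ (n+1) * Iu) := by
              apply mul_le_mul _ hintbd hintnn (by positivity)
              apply div_le_div_of_nonneg_left (by positivity) hfacpos hΓβ_ge
          _ = ((n + 1).choose i : ℝ) * (b t ^ (n + 1 - i) * g t ^ i *
              Real.Gamma α ^ i * (K ^ (n+1) * Iu)) / (Nat.factorial (k n - 1) : ℝ) := by ring
          _ ≤ ((n + 1).choose i : ℝ) * ((M' * G * K) ^ (n+1) * Iu) / (Nat.factorial (k n - 1) : ℝ) := by
              exact (div_le_div_iff_of_pos_right hfacpos).2 (mul_le_mul_of_nonneg_left hnum (by positivity))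
      calc (∑ i ∈ Finset.range (n + 1 + 1),
          ((n + 1).choose i : ℝ) * b t ^ (n + 1 - i) * g t ^ i *
            Real.Gamma α ^ i / Real.Gamma ((i : ℝ) * α + ((n : ℝ) + 1) - (i : ℝ)) *
            ∫ s in (0:ℝ)..t, (t - s) ^ ((i : ℝ) * α + ((n : ℝ) + 1) - (i : ℝ) - 1) * u s)
          ≤ ∑ i ∈ Finset.range (n + 1 + 1),
            ((n + 1).choose i : ℝ) * ((M' * G * K) ^ (n+1) * Iu) / (Nat.factorial (k n - 1) : ℝ) :=
            Finset.sum_le_sum termbd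
        _ = (∑ i ∈ Finset.range (n + 1 + 1), ((n + 1).choose i : ℝ)) *
            ((M' * G * K) ^ (n+1) * Iu) / (Nat.factorial (k n - 1) : ℝ) := by
            rw [← Finset.sum_div, ← Finset.sum_mul]
        _ = P ^ (n+1) * Iu / (Nat.factorial (k n - 1) : ℝ) := by
            have hch : (∑ i ∈ Finset.range (n + 1 + 1), ((n + 1).choose i : ℝ)) = 2 ^ (n+1) := by
              rw [← Nat.cast_sum]
              norm_cast
              exact Nat.sum_range_choose (n+1)
            rw [hch, hP]
            ring
    -- step 2: P^(n+1) ≤ S^(k n + 1)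
    have step2 : P ^ (n+1) ≤ S ^ (k n + 1) := by
      have hle : n + 1 ≤ c * (k n + 1) := by
        have h1 : (1:ℝ)/α ≤ (c:ℝ) := Nat.le_ceil _
        have h2 : ((n:ℝ)+1) ≤ ((c:ℝ)) * ((k n : ℝ) + 1) := by
          have hainv : ((n:ℝ)+1) ≤ ((k n : ℝ)+1) / α := by
            rw [le_div_iff₀ hα0]; linarith
          calc ((n:ℝ)+1) ≤ ((k n : ℝ)+1) / α := hainv
            _ = (1/α) * ((k n : ℝ)+1) := by ring
            _ ≤ (c:ℝ) * ((k n : ℝ)+1) := by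
                apply mul_le_mul_of_nonneg_right h1 (by positivity)
        exact_mod_cast h2
      calc P ^ (n+1) ≤ P ^ (c * (k n + 1)) := pow_le_pow_right₀ hP1 hle
        _ = (P ^ c) ^ (k n + 1) := by rw [pow_mul]
        _ = S ^ (k n + 1) := by rw [hS]
    -- finish
    have hSsplit : S ^ (k n + 1) = S ^ 2 * S ^ (k n - 1) := by
      rw [← pow_add]
      congr 1
      omega
    calc (∑ i ∈ Finset.range (n + 1 + 1),
        ((n + 1).choose i : ℝ) * b t ^ (n + 1 - i) * g t ^ i *
          Real.Gamma α ^ i / Real.Gamma ((i : ℝ) * α + ((n : ℝ) + 1) - (i : ℝ)) *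
          ∫ s in (0:ℝ)..t, (t - s) ^ ((i : ℝ) * α + ((n : ℝ) + 1) - (i : ℝ) - 1) * u s)
        ≤ P ^ (n+1) * Iu / (Nat.factorial (k n - 1) : ℝ) := step1
      _ ≤ S ^ (k n + 1) * Iu / (Nat.factorial (k n - 1) : ℝ) := by
          exact (div_le_div_iff_of_pos_right hfacpos).2 (mul_le_mul_of_nonneg_right step2 hIu0)
      _ = gbd n := by rw [hSsplit, hgbd]; ring
  exact squeeze_zero' (Eventually.of_forall hHnonneg) hbound hgbd_tendsto
end

section
/- Let 0 < α < 1 and I = [0, T) with 0 < T ≤ ∞. Let b, g : I → ℝ be nonnegative, nondecreasing, continuous functions on I. For t ∈ I and τ ≥ 0, the double series L(t; τ) = ∑_{n=0}^{∞} ∑_{i=0}^{n} C(n,i) · b(t)^{n−i} · g(t)^{i} · (Γ(α))^{i} / Γ(iα + n − i + 1) · τ^{iα + n − i} converges, and L(t; τ) ≤ E_α(g(t)·Γ(α)·τ^α) · exp((1/α)·b(t)·τ). -/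
open MeasureTheory Real Finset

/-- The Mittag-Leffler function `E_α(z) = ∑_{k=0}^∞ z^k / Γ(kα + 1)`. -/
noncomputable def mittagLeffler (α z : ℝ) : ℝ := ∑' k : ℕ, z ^ k / Real.Gamma ((k : ℝ) * α + 1)

lemma gammaFact (α : ℝ) (hα0 : 0 < α) (hα1 : α ≤ 1) (i : ℕ) :
    ∀ k : ℕ, ((i + k).factorial : ℝ) * Real.Gamma ((i : ℝ) * α + 1) * α ^ k ≤
      (i.factorial : ℝ) * Real.Gamma ((i : ℝ) * α + (k : ℝ) + 1) := by
  have hia : (0 : ℝ) ≤ (i : ℝ) * α := by positivity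
  intro k
  induction k with
  | zero => simp
  | succ k ih =>
      have hx : (0 : ℝ) < (i : ℝ) * α + (k : ℝ) + 1 := by positivity
      have hG : Real.Gamma ((i : ℝ) * α + (k + 1 : ℕ) + 1)
          = ((i : ℝ) * α + (k : ℝ) + 1) * Real.Gamma ((i : ℝ) * α + (k : ℝ) + 1) := by
        rw [show (i : ℝ) * α + ((k : ℕ) + 1 : ℕ) + 1 = ((i : ℝ) * α + (k : ℝ) + 1) + 1 by
          push_cast; ring]
        exact Real.Gamma_add_one hx.ne'
      have hGpos : 0 < Real.Gamma ((i : ℝ) * α + (k : ℝ) + 1) := Real.Gamma_pos_of_pos hx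
      have hfac : ((i + (k + 1)).factorial : ℝ) = ((i : ℝ) + k + 1) * ((i + k).factorial : ℝ) := by
        rw [show i + (k + 1) = (i + k) + 1 by ring]
        push_cast [Nat.factorial_succ]
        ring
      calc ((i + (k + 1)).factorial : ℝ) * Real.Gamma ((i : ℝ) * α + 1) * α ^ (k + 1)
          = (((i : ℝ) + k + 1) * α) *
              (((i + k).factorial : ℝ) * Real.Gamma ((i : ℝ) * α + 1) * α ^ k) := by
            rw [hfac]; ring
        _ ≤ (((i : ℝ) + k + 1) * α) *
              ((i.factorial : ℝ) * Real.Gamma ((i : ℝ) * α + (k : ℝ) + 1)) := by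
            have h1 : (0:ℝ) ≤ ((i : ℝ) + k + 1) * α := by positivity
            exact mul_le_mul_of_nonneg_left ih h1
        _ ≤ ((i : ℝ) * α + (k : ℝ) + 1) *
              ((i.factorial : ℝ) * Real.Gamma ((i : ℝ) * α + (k : ℝ) + 1)) := by
            have h2 : ((i : ℝ) + k + 1) * α ≤ (i : ℝ) * α + (k : ℝ) + 1 := by
              nlinarith [Nat.cast_nonneg (α := ℝ) k]
            have h3 : (0:ℝ) ≤ (i.factorial : ℝ) * Real.Gamma ((i : ℝ) * α + (k : ℝ) + 1) := by
              positivity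
            exact mul_le_mul_of_nonneg_right h2 h3
        _ = (i.factorial : ℝ) * Real.Gamma ((i : ℝ) * α + (k + 1 : ℕ) + 1) := by rw [hG]; ring

set_option maxHeartbeats 1000000 in
lemma ml_summable (α z : ℝ) (hα : 0 < α) (hz : 0 ≤ z) :
    Summable (fun k : ℕ => z ^ k / Real.Gamma ((k : ℝ) * α + 1)) := by
  set f : ℕ → ℝ := fun k => z ^ k / Real.Gamma ((k : ℝ) * α + 1) with hf
  have hfnonneg : ∀ k, 0 ≤ f k := fun k => by
    have : 0 < Real.Gamma ((k : ℝ) * α + 1) := Real.Gamma_pos_of_pos (by positivity)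
    simp only [hf]
    positivity
  obtain ⟨N, hN1, hNα⟩ : ∃ N : ℕ, 1 ≤ N ∧ 1 ≤ (N : ℝ) * α := by
    refine ⟨⌈1 / α⌉₊, ?_, ?_⟩
    · rw [Nat.one_le_ceil_iff]; positivity
    · have : (1 / α : ℝ) ≤ ⌈1 / α⌉₊ := Nat.le_ceil _
      calc (1:ℝ) = (1/α) * α := by field_simp
      _ ≤ (⌈1 / α⌉₊ : ℝ) * α := by gcongr
  haveI : NeZero N := ⟨Nat.one_le_iff_ne_zero.mp hN1⟩
  set Z : ℝ := max z 1 with hZ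
  have hZ1 : (1:ℝ) ≤ Z := le_max_right _ _
  have hzZ : z ≤ Z := le_max_left _ _
  have hZ0 : (0:ℝ) ≤ Z := by linarith
  set C : ℝ := Z ^ N + ∑ r ∈ Finset.range N, f r with hC
  have hCf : ∀ r < N, f r ≤ C := by
    intro r hr
    have h1 : f r ≤ ∑ r ∈ Finset.range N, f r :=
      Finset.single_le_sum (fun i _ => hfnonneg i) (Finset.mem_range.mpr hr)
    have : (0:ℝ) ≤ Z ^ N := by positivity
    linarith
  have hCZ : Z ^ N ≤ C := by
    have : (0:ℝ) ≤ ∑ r ∈ Finset.range N, f r := Finset.sum_nonneg fun i _ => hfnonneg i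
    linarith
  have hC0 : 0 ≤ C := le_trans (by positivity) hCZ
  have hMsummable : Summable (fun p : ℕ × Fin N => C * (Z ^ N) ^ p.1 / (p.1.factorial : ℝ)) := by
    refine (summable_prod_of_nonneg fun p => by positivity).mpr ⟨fun q => Summable.of_finite, ?_⟩
    have h : Summable (fun q : ℕ => (N : ℝ) * (C * ((Z ^ N) ^ q / (q.factorial : ℝ)))) :=
      ((Real.summable_pow_div_factorial (Z ^ N)).mul_left C).mul_left _
    refine h.congr fun q => ?_
    rw [tsum_fintype]
    simp [Finset.sum_const, Finset.card_univ, nsmul_eq_mul, mul_div_assoc]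
  have hbound : ∀ p : ℕ × Fin N,
      f (p.1 * N + (p.2 : ℕ)) ≤ C * (Z ^ N) ^ p.1 / (p.1.factorial : ℝ) := by
    rintro ⟨q, r⟩
    rcases Nat.eq_zero_or_pos q with hq | hq
    · subst hq
      simpa using hCf r r.isLt
    · have hq1 : (1:ℝ) ≤ (q:ℝ) := by exact_mod_cast hq
      have hArg1 : (q : ℝ) * ((N:ℝ) * α) + 1 ≤ ((q * N + (r:ℕ) : ℕ) : ℝ) * α + 1 := by
        push_cast
        have : (0:ℝ) ≤ (r : ℝ) * α := by positivity
        nlinarith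
      have h2a : (2:ℝ) ≤ (q:ℝ) * ((N:ℝ)*α) + 1 := by nlinarith
      have hq2 : (2:ℝ) ≤ (q:ℝ) + 1 := by linarith
      have hqN : (q:ℝ) + 1 ≤ (q:ℝ) * ((N:ℝ)*α) + 1 := by nlinarith
      have hmono := Real.Gamma_strictMonoOn_Ici.monotoneOn
      have hG1 : Real.Gamma ((q:ℝ) + 1) ≤ Real.Gamma ((q:ℝ) * ((N:ℝ)*α) + 1) :=
        hmono (Set.mem_Ici.mpr hq2) (Set.mem_Ici.mpr h2a) hqN
      have hG2 : Real.Gamma ((q:ℝ) * ((N:ℝ)*α) + 1)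
          ≤ Real.Gamma (((q * N + (r:ℕ) : ℕ) : ℝ) * α + 1) :=
        hmono (Set.mem_Ici.mpr h2a) (Set.mem_Ici.mpr (le_trans h2a hArg1)) hArg1
      have hGfact : Real.Gamma ((q:ℝ) + 1) = (q.factorial : ℝ) := by
        exact_mod_cast Real.Gamma_nat_eq_factorial q
      have hGden : (q.factorial : ℝ) ≤ Real.Gamma (((q * N + (r:ℕ) : ℕ) : ℝ) * α + 1) := by
        rw [← hGfact]; exact le_trans hG1 hG2
      have hfq : (0:ℝ) < (q.factorial : ℝ) := by exact_mod_cast q.factorial_pos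
      have hnum : z ^ (q * N + (r:ℕ)) ≤ C * (Z ^ N) ^ q := by
        calc z ^ (q * N + (r:ℕ)) ≤ Z ^ (q * N + (r:ℕ)) := pow_le_pow_left₀ hz hzZ _
          _ ≤ Z ^ (q * N + N) := pow_le_pow_right₀ hZ1 (by have := r.isLt; omega)
          _ = Z ^ N * (Z ^ N) ^ q := by rw [← pow_mul, ← pow_add]; ring_nf
          _ ≤ C * (Z ^ N) ^ q := by
              have : (0:ℝ) ≤ (Z ^ N) ^ q := by positivity
              exact mul_le_mul_of_nonneg_right hCZ this
      calc f (q * N + (r:ℕ))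
          = z ^ (q * N + (r:ℕ)) / Real.Gamma (((q * N + (r:ℕ) : ℕ) : ℝ) * α + 1) := rfl
        _ ≤ C * (Z ^ N) ^ q / (q.factorial : ℝ) := div_le_div₀ (by positivity) hnum hfq hGden
  have hsum : Summable (f ∘ (Nat.divModEquiv N).symm) :=
    Summable.of_nonneg_of_le (fun p => hfnonneg _) hbound hMsummable
  exact ((Nat.divModEquiv N).symm.summable_iff).mp hsum

lemma rpow_split (τ α : ℝ) (hτ : 0 ≤ τ) (hα : 0 < α) (i k : ℕ) :
    τ ^ ((i:ℝ) * α + (k:ℝ)) = (τ ^ α) ^ i * τ ^ k := by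
  rcases hτ.eq_or_lt with h | h
  · subst h
    rcases Nat.eq_zero_or_pos i with hi | hi
    · subst hi
      rcases Nat.eq_zero_or_pos k with hk | hk
      · subst hk; simp
      · rw [Real.zero_rpow (by push_cast; positivity)]
        simp [zero_pow hk.ne']
    · rw [Real.zero_rpow, Real.zero_rpow hα.ne', zero_pow hi.ne', zero_mul]
      have : (0:ℝ) < (i:ℝ) * α := by positivity
      have : (0:ℝ) ≤ (k:ℝ) := by positivity
      positivity
  · rw [Real.rpow_add h, Real.rpow_natCast]
    congr 1
    rw [mul_comm, Real.rpow_mul hτ, Real.rpow_natCast]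

/-- Third claim in the proof of Theorem 2.1: the double series `L(t; τ)` converges and
`L(t; τ) ≤ E_α(g(t)Γ(α)τ^α) · exp((1/α)·b(t)·τ)`. -/
theorem L_series_convergent_and_bounded
    (α : ℝ) (hα0 : 0 < α) (hα1 : α < 1)
    (T : EReal) (hT : 0 < T)
    (b g : ℝ → ℝ)
    (hb_nonneg : ∀ t : ℝ, 0 ≤ t → (t : EReal) < T → 0 ≤ b t)
    (hb_mono : ∀ s t : ℝ, 0 ≤ s → s ≤ t → (t : EReal) < T → b s ≤ b t)
    (hb_cont : ContinuousOn b {t : ℝ | 0 ≤ t ∧ (t : EReal) < T})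
    (hg_nonneg : ∀ t : ℝ, 0 ≤ t → (t : EReal) < T → 0 ≤ g t)
    (hg_mono : ∀ s t : ℝ, 0 ≤ s → s ≤ t → (t : EReal) < T → g s ≤ g t)
    (hg_cont : ContinuousOn g {t : ℝ | 0 ≤ t ∧ (t : EReal) < T})
    (t τ : ℝ) (ht0 : 0 ≤ t) (htT : (t : EReal) < T) (hτ : 0 ≤ τ) :
    Summable (fun n : ℕ => ∑ i ∈ Finset.range (n + 1),
      (n.choose i : ℝ) * b t ^ (n - i) * g t ^ i *
        Real.Gamma α ^ i / Real.Gamma ((i : ℝ) * α + (n : ℝ) - (i : ℝ) + 1) *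
        τ ^ ((i : ℝ) * α + (n : ℝ) - (i : ℝ))) ∧
    (∑' n : ℕ, ∑ i ∈ Finset.range (n + 1),
      (n.choose i : ℝ) * b t ^ (n - i) * g t ^ i *
        Real.Gamma α ^ i / Real.Gamma ((i : ℝ) * α + (n : ℝ) - (i : ℝ) + 1) *
        τ ^ ((i : ℝ) * α + (n : ℝ) - (i : ℝ))) ≤
      mittagLeffler α (g t * Real.Gamma α * τ ^ α) * Real.exp ((1 / α) * b t * τ) := by
  have hB : 0 ≤ b t := hb_nonneg t ht0 htT
  have hG : 0 ≤ g t := hg_nonneg t ht0 htT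
  have hΓα : 0 < Real.Gamma α := Real.Gamma_pos_of_pos hα0
  set z : ℝ := g t * Real.Gamma α * τ ^ α with hzdef
  have hz0 : 0 ≤ z := mul_nonneg (mul_nonneg hG hΓα.le) (Real.rpow_nonneg hτ α)
  set w : ℝ := (1 / α) * b t * τ with hwdef
  have hw0 : 0 ≤ w := by positivity
  set c : ℕ → ℝ := fun i => z ^ i / Real.Gamma ((i : ℝ) * α + 1) with hcdef
  set d : ℕ → ℝ := fun k => w ^ k / (k.factorial : ℝ) with hddef
  have hcn : ∀ i, 0 ≤ c i := fun i => by
    have : 0 < Real.Gamma ((i : ℝ) * α + 1) := Real.Gamma_pos_of_pos (by positivity)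
    simp only [hcdef]; positivity
  have hdn : ∀ k, 0 ≤ d k := fun k => by
    have : (0:ℝ) < (k.factorial : ℝ) := by exact_mod_cast k.factorial_pos
    simp only [hddef]; positivity
  have hc : Summable c := ml_summable α z hα0 hz0
  have hd : Summable d := Real.summable_pow_div_factorial w
  have hnc : Summable (fun i => ‖c i‖) := by
    refine hc.congr fun i => ?_
    exact (Real.norm_of_nonneg (hcn i)).symm
  have hnd : Summable (fun k => ‖d k‖) := by
    refine hd.congr fun k => ?_
    exact (Real.norm_of_nonneg (hdn k)).symm
  have hS : Summable (fun n => ∑ i ∈ Finset.range (n + 1), c i * d (n - i)) :=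
    (summable_norm_sum_mul_range_of_summable_norm hnc hnd).of_norm
  have hEq : (∑' i, c i) * (∑' k, d k)
      = ∑' n, ∑ i ∈ Finset.range (n + 1), c i * d (n - i) :=
    tsum_mul_tsum_eq_tsum_sum_range_of_summable_norm hnc hnd
  -- key pointwise bound
  have key : ∀ n : ℕ, ∀ i ∈ Finset.range (n + 1),
      (n.choose i : ℝ) * b t ^ (n - i) * g t ^ i *
        Real.Gamma α ^ i / Real.Gamma ((i : ℝ) * α + (n : ℝ) - (i : ℝ) + 1) *
        τ ^ ((i : ℝ) * α + (n : ℝ) - (i : ℝ)) ≤ c i * d (n - i) := by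
    intro n i hi
    rw [Finset.mem_range] at hi
    have hin : i ≤ n := Nat.lt_succ_iff.mp hi
    set k : ℕ := n - i with hkdef
    have hcast : (n : ℝ) - (i : ℝ) = (k : ℝ) := by
      rw [hkdef, Nat.cast_sub hin]
    have he : (i : ℝ) * α + (n : ℝ) - (i : ℝ) = (i : ℝ) * α + (k : ℝ) := by
      rw [← hcast]; ring
    rw [he, rpow_split τ α hτ hα0 i k]
    have hΓ1 : 0 < Real.Gamma ((i : ℝ) * α + 1) := Real.Gamma_pos_of_pos (by positivity)
    have hΓ2 : 0 < Real.Gamma ((i : ℝ) * α + (k : ℝ) + 1) := Real.Gamma_pos_of_pos (by positivity)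
    have hkf : (0:ℝ) < (k.factorial : ℝ) := by exact_mod_cast k.factorial_pos
    have hif : (0:ℝ) < (i.factorial : ℝ) := by exact_mod_cast i.factorial_pos
    -- choose identity
    have hchoose : (n.choose i : ℝ) * (i.factorial : ℝ) * (k.factorial : ℝ)
        = ((i + k).factorial : ℝ) := by
      rw [show i + k = n by omega]
      exact_mod_cast Nat.choose_mul_factorial_mul_factorial hin
    have hgf := gammaFact α hα0 hα1.le i k
    have hkey : (n.choose i : ℝ) * (Real.Gamma ((i : ℝ) * α + 1) * α ^ k * (k.factorial : ℝ))
        ≤ Real.Gamma ((i : ℝ) * α + (k : ℝ) + 1) := by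
      have h1 : (n.choose i : ℝ) * (i.factorial : ℝ) * (k.factorial : ℝ) *
          Real.Gamma ((i : ℝ) * α + 1) * α ^ k
          ≤ (i.factorial : ℝ) * Real.Gamma ((i : ℝ) * α + (k : ℝ) + 1) := by
        rw [hchoose]; exact hgf
      nlinarith [hif, mul_pos (mul_pos hΓ1 (pow_pos hα0 k)) hkf]
    have hQ : (n.choose i : ℝ) / Real.Gamma ((i : ℝ) * α + (k : ℝ) + 1)
        ≤ 1 / (Real.Gamma ((i : ℝ) * α + 1) * α ^ k * (k.factorial : ℝ)) := by
      rw [div_le_div_iff₀ hΓ2 (by positivity)]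
      linarith [hkey]
    have hP : (0:ℝ) ≤ b t ^ k * g t ^ i * Real.Gamma α ^ i * (τ ^ α) ^ i * τ ^ k := by
      have : (0:ℝ) ≤ τ ^ α := Real.rpow_nonneg hτ α
      positivity
    have hcd : c i * d k = (1 / (Real.Gamma ((i : ℝ) * α + 1) * α ^ k * (k.factorial : ℝ)))
        * (b t ^ k * g t ^ i * Real.Gamma α ^ i * (τ ^ α) ^ i * τ ^ k) := by
      simp only [hcdef, hddef, hzdef, hwdef]
      rw [mul_pow, mul_pow, mul_pow, mul_pow, div_pow, one_pow]
      field_simp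
    have ha : (n.choose i : ℝ) * b t ^ (n - i) * g t ^ i *
        Real.Gamma α ^ i / Real.Gamma ((i : ℝ) * α + (k : ℝ) + 1) * ((τ ^ α) ^ i * τ ^ k)
        = ((n.choose i : ℝ) / Real.Gamma ((i : ℝ) * α + (k : ℝ) + 1))
          * (b t ^ k * g t ^ i * Real.Gamma α ^ i * (τ ^ α) ^ i * τ ^ k) := by
      rw [← hkdef]; ring
    rw [ha, hcd]
    exact mul_le_mul_of_nonneg_right hQ hP
  have hterm_nonneg : ∀ n : ℕ, ∀ i ∈ Finset.range (n + 1),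
      0 ≤ (n.choose i : ℝ) * b t ^ (n - i) * g t ^ i *
        Real.Gamma α ^ i / Real.Gamma ((i : ℝ) * α + (n : ℝ) - (i : ℝ) + 1) *
        τ ^ ((i : ℝ) * α + (n : ℝ) - (i : ℝ)) := by
    intro n i hi
    rw [Finset.mem_range] at hi
    have hin : (i : ℝ) ≤ (n : ℝ) := by exact_mod_cast Nat.lt_succ_iff.mp hi
    have hΓ : 0 < Real.Gamma ((i : ℝ) * α + (n : ℝ) - (i : ℝ) + 1) := by
      apply Real.Gamma_pos_of_pos
      have : (0:ℝ) ≤ (i : ℝ) * α := by positivity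
      linarith
    have hτp : (0:ℝ) ≤ τ ^ ((i : ℝ) * α + (n : ℝ) - (i : ℝ)) := Real.rpow_nonneg hτ _
    have hch : (0:ℝ) ≤ (n.choose i : ℝ) := by positivity
    positivity
  have hle : ∀ n : ℕ,
      (∑ i ∈ Finset.range (n + 1),
        (n.choose i : ℝ) * b t ^ (n - i) * g t ^ i *
          Real.Gamma α ^ i / Real.Gamma ((i : ℝ) * α + (n : ℝ) - (i : ℝ) + 1) *
          τ ^ ((i : ℝ) * α + (n : ℝ) - (i : ℝ)))
      ≤ ∑ i ∈ Finset.range (n + 1), c i * d (n - i) :=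
    fun n => Finset.sum_le_sum (key n)
  have hA : Summable (fun n : ℕ => ∑ i ∈ Finset.range (n + 1),
      (n.choose i : ℝ) * b t ^ (n - i) * g t ^ i *
        Real.Gamma α ^ i / Real.Gamma ((i : ℝ) * α + (n : ℝ) - (i : ℝ) + 1) *
        τ ^ ((i : ℝ) * α + (n : ℝ) - (i : ℝ))) :=
    Summable.of_nonneg_of_le (fun n => Finset.sum_nonneg (hterm_nonneg n)) hle hS
  refine ⟨hA, ?_⟩
  have hML : mittagLeffler α z = ∑' i, c i := rfl
  have hExp : Real.exp w = ∑' k, d k := by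
    rw [Real.exp_eq_exp_ℝ, NormedSpace.exp_eq_tsum_div]
  calc (∑' n : ℕ, ∑ i ∈ Finset.range (n + 1),
      (n.choose i : ℝ) * b t ^ (n - i) * g t ^ i *
        Real.Gamma α ^ i / Real.Gamma ((i : ℝ) * α + (n : ℝ) - (i : ℝ) + 1) *
        τ ^ ((i : ℝ) * α + (n : ℝ) - (i : ℝ)))
      ≤ ∑' n, ∑ i ∈ Finset.range (n + 1), c i * d (n - i) := Summable.tsum_le_tsum hle hA hS
    _ = (∑' i, c i) * (∑' k, d k) := hEq.symm
    _ = mittagLeffler α z * Real.exp w := by rw [hML, hExp]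
end

section
/- Let 0 < α < 1 and I = [0, T) with 0 < T ≤ ∞. Let a : I → ℝ be nonnegative and locally integrable on I, and let M > 0. Then for every t ∈ I, the double series ∑_{n=1}^{∞} ∑_{i=0}^{n} C(n,i) · M^{n} · (Γ(α))^{i} / Γ(iα + n − i) · ∫₀ᵗ (t − s)^{iα + n − i − 1} a(s) ds converges to a finite value. -/
set_option maxHeartbeats 1000000

open MeasureTheory Real Finset Nat

lemma aux_pow_div_factorial (F : ℝ) (hF : 0 ≤ F) (K : ℕ) (hK : 2 * F ≤ K) :
    ∀ k, K ≤ k → F ^ k / (k ! : ℝ) ≤ (F ^ K / (K ! : ℝ) * 2 ^ K) * (1/2) ^ k := by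
  intro k hk
  induction k, hk using Nat.le_induction with
  | base =>
    rw [mul_assoc, ← mul_pow]
    norm_num
  | succ k hk ih =>
    have hk1 : (0:ℝ) < (k:ℝ) + 1 := by positivity
    have h1 : F ^ (k+1) / ((k+1)! : ℝ) = (F ^ k / (k ! : ℝ)) * (F / ((k:ℝ)+1)) := by
      rw [Nat.factorial_succ]
      push_cast
      field_simp
      ring
    have h2 : F / ((k:ℝ)+1) ≤ 1/2 := by
      rw [div_le_div_iff₀ hk1 (by norm_num)]
      have : (K:ℝ) ≤ k := by exact_mod_cast hk
      linarith
    have h3 : (0:ℝ) ≤ F ^ K / (K ! : ℝ) * 2 ^ K := by positivity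
    calc F ^ (k+1) / ((k+1)! : ℝ) = (F ^ k / (k ! : ℝ)) * (F / ((k:ℝ)+1)) := h1
      _ ≤ ((F ^ K / (K ! : ℝ) * 2 ^ K) * (1/2) ^ k) * (1/2) := by
          apply mul_le_mul ih h2 (by positivity) (by positivity)
      _ = (F ^ K / (K ! : ℝ) * 2 ^ K) * (1/2) ^ (k+1) := by ring

/-- Finiteness of the right-hand side of the mixed Gronwall-Bellman inequality
(third claim in the proof of Theorem 2.1, with `b(t), g(t) ≤ M`). -/
theorem rhs_series_summable
    (α : ℝ) (hα0 : 0 < α) (hα1 : α < 1)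
    (T : EReal) (hT : 0 < T)
    (a : ℝ → ℝ) (M : ℝ) (hM : 0 < M)
    (ha_nonneg : ∀ t : ℝ, 0 ≤ t → (t : EReal) < T → 0 ≤ a t)
    (ha_int : ∀ t : ℝ, 0 ≤ t → (t : EReal) < T → IntervalIntegrable a volume 0 t) :
    ∀ t : ℝ, 0 ≤ t → (t : EReal) < T →
      Summable (fun n : ℕ => ∑ i ∈ Finset.range (n + 2),
        ((n + 1).choose i : ℝ) * M ^ (n + 1) *
          Real.Gamma α ^ i / Real.Gamma ((i : ℝ) * α + ((n : ℝ) + 1) - (i : ℝ)) *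
          ∫ s in (0:ℝ)..t, (t - s) ^ ((i : ℝ) * α + ((n : ℝ) + 1) - (i : ℝ) - 1) * a s) := by
  intro t ht0 htT
  set A := ∫ s in (0:ℝ)..t, a s with hA_def
  have hsT : ∀ s : ℝ, s ≤ t → (s : EReal) < T := fun s hs =>
    lt_of_le_of_lt (EReal.coe_le_coe_iff.mpr hs) htT
  have haInt : IntervalIntegrable a volume 0 t := ha_int t ht0 htT
  have hA0 : 0 ≤ A :=
    intervalIntegral.integral_nonneg ht0 (fun u hu => ha_nonneg u hu.1 (hsT u hu.2))
  set Kγ := max 1 (Real.Gamma α) with hKγ_def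
  set Lt := max 1 t with hLt_def
  have hKγ1 : (1:ℝ) ≤ Kγ := le_max_left _ _
  have hLt1 : (1:ℝ) ≤ Lt := le_max_left _ _
  set S := 2 * M * Kγ * Lt with hS_def
  have hS0 : 0 < S := by
    have h1 : (0:ℝ) < Kγ := lt_of_lt_of_le one_pos hKγ1
    have h2 : (0:ℝ) < Lt := lt_of_lt_of_le one_pos hLt1
    positivity
  set E := max 1 S with hE_def
  have hE1 : (1:ℝ) ≤ E := le_max_left _ _
  set q := ⌈(2:ℝ)/α⌉₊ with hq_def
  have hq : (2:ℝ)/α ≤ q := Nat.le_ceil _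
  set F := E ^ q with hF_def
  have hF1 : (1:ℝ) ≤ F := one_le_pow₀ hE1
  set K0 := max 2 ⌈2*F⌉₊ with hK0_def
  have hK0F : 2 * F ≤ (K0:ℝ) :=
    le_trans (Nat.le_ceil _) (by exact_mod_cast Nat.le_max_right 2 ⌈2*F⌉₊)
  have hK02 : (2:ℝ) ≤ (K0:ℝ) := by exact_mod_cast Nat.le_max_left 2 ⌈2*F⌉₊
  set C0 := F ^ K0 / (K0 ! : ℝ) * 2 ^ K0 with hC0_def
  have hC00 : (0:ℝ) ≤ C0 := by positivity
  set N := ⌈((K0:ℝ) + 4)/α⌉₊ with hN_def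
  set ρ := (1/2:ℝ) ^ α with hρ_def
  have hρ0 : (0:ℝ) ≤ ρ := Real.rpow_nonneg (by norm_num) _
  have hρ1 : ρ < 1 := Real.rpow_lt_one (by norm_num) (by norm_num) hα0
  apply Summable.of_norm_bounded_eventually_nat (g := fun n => (4 * A * C0) * ρ ^ n)
    (((summable_geometric_of_lt_one hρ0 hρ1).mul_left _))
  filter_upwards [Filter.eventually_ge_atTop N] with n hn
  -- basic facts about this n
  have hnR : (N:ℝ) ≤ (n:ℝ) := by exact_mod_cast hn
  have hn1α : (K0:ℝ) + 4 ≤ ((n:ℝ)+1) * α := by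
    have h1 : ((K0:ℝ)+4)/α ≤ (N:ℝ) := Nat.le_ceil _
    have h2 : ((K0:ℝ)+4)/α * α ≤ ((n:ℝ)+1) * α := by
      apply mul_le_mul_of_nonneg_right (by linarith) hα0.le
    rwa [div_mul_cancel₀ _ (ne_of_gt hα0)] at h2
  set m := ⌊((n:ℝ)+1) * α⌋₊ with hm_def
  have hmle : (m:ℝ) ≤ ((n:ℝ)+1)*α := Nat.floor_le (by positivity)
  have hmgt : ((n:ℝ)+1)*α < (m:ℝ) + 1 := Nat.lt_floor_add_one _
  have hmK : (K0:ℝ) + 3 < (m:ℝ) := by linarith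
  have hm1 : 1 ≤ m := by
    have : (1:ℝ) ≤ (m:ℝ) := by linarith
    exact_mod_cast this
  set k := m - 1 with hk_def
  have hkm : m = k + 1 := (Nat.succ_pred_eq_of_pos hm1).symm
  have hkR : (m:ℝ) = (k:ℝ) + 1 := by rw [hkm]; push_cast; ring
  have hK0k : K0 ≤ k := by
    have : (K0:ℝ) ≤ (k:ℝ) := by linarith
    exact_mod_cast this
  have hΓfac : Real.Gamma (m:ℝ) = (k ! : ℝ) := by
    rw [hkR]
    exact_mod_cast Real.Gamma_nat_eq_factorial k
  have h2m : (2:ℝ) ≤ (m:ℝ) := by linarith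
  have hfacpos : (0:ℝ) < (k ! : ℝ) := by positivity
  -- per-index bound
  set B := (M * Kγ * Lt) ^ (n+1) * A / (k ! : ℝ) with hB_def
  have key : ∀ i ∈ Finset.range (n+2),
      |((n + 1).choose i : ℝ) * M ^ (n + 1) *
          Real.Gamma α ^ i / Real.Gamma ((i : ℝ) * α + ((n : ℝ) + 1) - (i : ℝ)) *
          ∫ s in (0:ℝ)..t, (t - s) ^ ((i : ℝ) * α + ((n : ℝ) + 1) - (i : ℝ) - 1) * a s|
        ≤ ((n + 1).choose i : ℝ) * B := by
    intro i hi
    have hi' : (i:ℝ) ≤ (n:ℝ)+1 := by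
      have := Nat.lt_succ_iff.mp (Finset.mem_range.mp hi)
      exact_mod_cast this
    have hi0 : (0:ℝ) ≤ (i:ℝ) := Nat.cast_nonneg i
    set x := (i : ℝ) * α + ((n : ℝ) + 1) - (i : ℝ) with hx_def
    have hxlow : ((n:ℝ)+1)*α ≤ x := by
      have h := mul_nonneg (sub_nonneg.2 hi') (sub_nonneg.2 hα1.le)
      have hexp : x = ((n:ℝ)+1)*α + (((n:ℝ)+1) - (i:ℝ)) * (1 - α) := by rw [hx_def]; ring
      linarith
    have hxhigh : x ≤ (n:ℝ)+1 := by
      have h := mul_nonneg hi0 (sub_nonneg.2 hα1.le)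
      have hexp : x = ((n:ℝ)+1) - (i:ℝ)*(1-α) := by rw [hx_def]; ring
      linarith
    have hxm : (m:ℝ) ≤ x := le_trans hmle hxlow
    have h2x : (2:ℝ) ≤ x := le_trans h2m hxm
    have hΓx : (k ! : ℝ) ≤ Real.Gamma x := by
      rw [← hΓfac]
      exact Real.Gamma_strictMonoOn_Ici.monotoneOn (Set.mem_Ici.mpr h2m)
        (Set.mem_Ici.mpr h2x) hxm
    have hΓxpos : 0 < Real.Gamma x := Real.Gamma_pos_of_pos (by linarith)
    set β := x - 1 with hβ_def
    have hβ0 : (0:ℝ) ≤ β := by simp only [hβ_def]; linarith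
    have hβn : β ≤ (n:ℝ)+1 := by simp only [hβ_def]; linarith
    -- integral bound
    have hgInt : IntervalIntegrable (fun s => t ^ β * a s) volume 0 t := haInt.const_mul _
    have hae : ∀ᵐ s ∂(volume.restrict (Set.uIoc 0 t)), ‖(t - s) ^ β * a s‖ ≤ t ^ β * a s := by
      rw [Set.uIoc_of_le ht0]
      refine (ae_restrict_iff' measurableSet_Ioc).mpr (Filter.Eventually.of_forall fun s hs => ?_)
      have ha_s : 0 ≤ a s := ha_nonneg s hs.1.le (hsT s hs.2)
      have h1 : 0 ≤ t - s := sub_nonneg.2 hs.2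
      rw [Real.norm_eq_abs, abs_mul, abs_of_nonneg (Real.rpow_nonneg h1 _), abs_of_nonneg ha_s]
      exact mul_le_mul_of_nonneg_right (Real.rpow_le_rpow h1 (by linarith [hs.1]) hβ0) ha_s
    have hIbound : |∫ s in (0:ℝ)..t, (t - s) ^ β * a s| ≤ t ^ β * A := by
      calc |∫ s in (0:ℝ)..t, (t - s) ^ β * a s|
          = ‖∫ s in (0:ℝ)..t, (t - s) ^ β * a s‖ := (Real.norm_eq_abs _).symm
        _ ≤ |∫ s in (0:ℝ)..t, t ^ β * a s| :=
            intervalIntegral.norm_integral_le_abs_of_norm_le hae hgInt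
        _ = |t ^ β * A| := by rw [intervalIntegral.integral_const_mul]
        _ = t ^ β * A := abs_of_nonneg (mul_nonneg (Real.rpow_nonneg ht0 _) hA0)
    -- numerator bound
    have hnum : M ^ (n+1) * Real.Gamma α ^ i * (t ^ β * A)
        ≤ M ^ (n+1) * Kγ ^ (n+1) * Lt ^ (n+1) * A := by
      have h1 : Real.Gamma α ^ i ≤ Kγ ^ (n+1) := by
        calc Real.Gamma α ^ i ≤ Kγ ^ i :=
              pow_le_pow_left₀ (Real.Gamma_nonneg_of_nonneg hα0.le) (le_max_right _ _) i
          _ ≤ Kγ ^ (n+1) := pow_le_pow_right₀ hKγ1 (by have := Nat.lt_succ_iff.mp (Finset.mem_range.mp hi); omega)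
      have h2 : t ^ β ≤ Lt ^ (n+1) := by
        calc t ^ β ≤ Lt ^ β := Real.rpow_le_rpow ht0 (le_max_right 1 t) hβ0
          _ ≤ Lt ^ (((n:ℝ))+1) := Real.rpow_le_rpow_of_exponent_le hLt1 hβn
          _ = Lt ^ (n+1) := by
              rw [show ((n:ℝ)+1) = ((n+1 : ℕ) : ℝ) by push_cast; ring, Real.rpow_natCast]
      have hM0 : (0:ℝ) ≤ M ^ (n+1) := by positivity
      have hKγ0 : (0:ℝ) ≤ Kγ ^ (n+1) := by positivity
      calc M ^ (n+1) * Real.Gamma α ^ i * (t ^ β * A)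
          = (M ^ (n+1) * Real.Gamma α ^ i * t ^ β) * A := by ring
        _ ≤ (M ^ (n+1) * Kγ ^ (n+1) * Lt ^ (n+1)) * A := by
            apply mul_le_mul_of_nonneg_right _ hA0
            calc M ^ (n+1) * Real.Gamma α ^ i * t ^ β
                ≤ M ^ (n+1) * Kγ ^ (n+1) * t ^ β := by
                  apply mul_le_mul_of_nonneg_right _ (Real.rpow_nonneg ht0 _)
                  exact mul_le_mul_of_nonneg_left h1 hM0
              _ ≤ M ^ (n+1) * Kγ ^ (n+1) * Lt ^ (n+1) := by
                  apply mul_le_mul_of_nonneg_left h2 (by positivity)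
    have hmain : M ^ (n+1) * Real.Gamma α ^ i / Real.Gamma x * (t ^ β * A) ≤
        M ^ (n+1) * Kγ ^ (n+1) * Lt ^ (n+1) * A / (k ! : ℝ) := by
      rw [div_mul_eq_mul_div]
      exact div_le_div₀ (by positivity) hnum hfacpos hΓx
    have hcoeff0 : (0:ℝ) ≤ M ^ (n+1) * Real.Gamma α ^ i / Real.Gamma x := by positivity
    calc |((n + 1).choose i : ℝ) * M ^ (n + 1) * Real.Gamma α ^ i / Real.Gamma x *
            ∫ s in (0:ℝ)..t, (t - s) ^ β * a s|
        = ((n + 1).choose i : ℝ) * (M ^ (n + 1) * Real.Gamma α ^ i / Real.Gamma x) *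
            |∫ s in (0:ℝ)..t, (t - s) ^ β * a s| := by
          rw [abs_mul]
          congr 1
          rw [abs_of_nonneg (by positivity)]
          ring
      _ ≤ ((n + 1).choose i : ℝ) * (M ^ (n + 1) * Real.Gamma α ^ i / Real.Gamma x) *
            (t ^ β * A) := by
          apply mul_le_mul_of_nonneg_left hIbound (by positivity)
      _ = ((n + 1).choose i : ℝ) *
            (M ^ (n + 1) * Real.Gamma α ^ i / Real.Gamma x * (t ^ β * A)) := by ring
      _ ≤ ((n + 1).choose i : ℝ) *
            (M ^ (n+1) * Kγ ^ (n+1) * Lt ^ (n+1) * A / (k ! : ℝ)) := by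
          apply mul_le_mul_of_nonneg_left hmain (Nat.cast_nonneg _)
      _ = ((n + 1).choose i : ℝ) * B := by
          rw [hB_def, mul_pow, mul_pow]
  -- sum the per-index bounds
  have hB0 : 0 ≤ B := by positivity
  have hsum : ‖∑ i ∈ Finset.range (n + 2),
        ((n + 1).choose i : ℝ) * M ^ (n + 1) *
          Real.Gamma α ^ i / Real.Gamma ((i : ℝ) * α + ((n : ℝ) + 1) - (i : ℝ)) *
          ∫ s in (0:ℝ)..t, (t - s) ^ ((i : ℝ) * α + ((n : ℝ) + 1) - (i : ℝ) - 1) * a s‖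
      ≤ S ^ (n+1) * A / (k ! : ℝ) := by
    rw [Real.norm_eq_abs]
    calc |∑ i ∈ Finset.range (n + 2),
        ((n + 1).choose i : ℝ) * M ^ (n + 1) *
          Real.Gamma α ^ i / Real.Gamma ((i : ℝ) * α + ((n : ℝ) + 1) - (i : ℝ)) *
          ∫ s in (0:ℝ)..t, (t - s) ^ ((i : ℝ) * α + ((n : ℝ) + 1) - (i : ℝ) - 1) * a s|
        ≤ ∑ i ∈ Finset.range (n + 2),
          |((n + 1).choose i : ℝ) * M ^ (n + 1) *
            Real.Gamma α ^ i / Real.Gamma ((i : ℝ) * α + ((n : ℝ) + 1) - (i : ℝ)) *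
            ∫ s in (0:ℝ)..t, (t - s) ^ ((i : ℝ) * α + ((n : ℝ) + 1) - (i : ℝ) - 1) * a s| :=
          Finset.abs_sum_le_sum_abs _ _
      _ ≤ ∑ i ∈ Finset.range (n + 2), ((n + 1).choose i : ℝ) * B := Finset.sum_le_sum key
      _ = (2:ℝ) ^ (n+1) * B := by
          rw [← Finset.sum_mul]
          congr 1
          rw [← Nat.cast_sum]
          norm_cast
          exact Nat.sum_range_choose (n+1)
      _ = S ^ (n+1) * A / (k ! : ℝ) := by
          rw [hB_def, hS_def]
          rw [show (2 * M * Kγ * Lt) = 2 * (M * Kγ * Lt) by ring, mul_pow]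
          ring
  -- tail estimate
  have hq2 : (2:ℝ) ≤ (q:ℝ) * α := (div_le_iff₀ hα0).mp hq
  have hkbig : ((n:ℝ)+1)*α - 2 ≤ (k:ℝ) := by linarith
  have hnqk : n + 1 ≤ q * k := by
    have e1 : 2*(k:ℝ) ≤ ((q:ℝ)*α)*(k:ℝ) :=
      mul_le_mul_of_nonneg_right hq2 (Nat.cast_nonneg k)
    have e2 : ((n:ℝ)+1)*α ≤ 2*(k:ℝ) := by linarith
    have e3 : ((q:ℝ)*α)*(k:ℝ) = ((q:ℝ)*(k:ℝ))*α := by ring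
    have h5 : ((n:ℝ)+1)*α ≤ ((q:ℝ)*(k:ℝ))*α := by linarith
    have h6 : ((n:ℝ)+1) ≤ (q:ℝ)*(k:ℝ) := le_of_mul_le_mul_right (by linarith) hα0
    have : ((n:ℝ)+1) ≤ ((q*k : ℕ):ℝ) := by push_cast; linarith
    exact_mod_cast this
  have hSF : S ^ (n+1) ≤ F ^ k := by
    calc S ^ (n+1) ≤ E ^ (n+1) := pow_le_pow_left₀ hS0.le (le_max_right 1 S) _
      _ ≤ E ^ (q*k) := pow_le_pow_right₀ hE1 hnqk
      _ = F ^ k := by rw [hF_def, ← pow_mul]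
  have hFk : F ^ k / (k ! : ℝ) ≤ C0 * (1/2) ^ k :=
    aux_pow_div_factorial F (by linarith) K0 hK0F k hK0k
  have hhalf : ((1:ℝ)/2) ^ k ≤ 4 * ρ ^ n := by
    have h7 : (n:ℝ)*α - 2 ≤ (k:ℝ) := by
      have : ((n:ℝ)+1)*α = (n:ℝ)*α + α := by ring
      linarith
    calc ((1:ℝ)/2) ^ k = ((1:ℝ)/2) ^ ((k:ℝ)) := (Real.rpow_natCast _ k).symm
      _ ≤ ((1:ℝ)/2) ^ ((n:ℝ)*α - 2) :=
          Real.rpow_le_rpow_of_exponent_ge (by norm_num) (by norm_num) h7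
      _ = 4 * ρ ^ n := by
          rw [Real.rpow_sub (by norm_num), hρ_def, mul_comm (n:ℝ) α,
            Real.rpow_mul (by norm_num : (0:ℝ) ≤ 1/2), Real.rpow_natCast]
          rw [show ((2:ℝ)) = ((2:ℕ):ℝ) by norm_num, Real.rpow_natCast]
          norm_num
          ring
  -- combine
  calc ‖∑ i ∈ Finset.range (n + 2),
        ((n + 1).choose i : ℝ) * M ^ (n + 1) *
          Real.Gamma α ^ i / Real.Gamma ((i : ℝ) * α + ((n : ℝ) + 1) - (i : ℝ)) *
          ∫ s in (0:ℝ)..t, (t - s) ^ ((i : ℝ) * α + ((n : ℝ) + 1) - (i : ℝ) - 1) * a s‖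
      ≤ S ^ (n+1) * A / (k ! : ℝ) := hsum
    _ ≤ F ^ k * A / (k ! : ℝ) :=
        div_le_div₀ (by positivity) (mul_le_mul_of_nonneg_right hSF hA0) hfacpos le_rfl
    _ = A * (F ^ k / (k ! : ℝ)) := by ring
    _ ≤ A * (C0 * (1/2) ^ k) := mul_le_mul_of_nonneg_left hFk hA0
    _ ≤ A * (C0 * (4 * ρ ^ n)) := by
        apply mul_le_mul_of_nonneg_left _ hA0
        exact mul_le_mul_of_nonneg_left hhalf hC00
    _ = 4 * A * C0 * ρ ^ n := by ring
end
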